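/- Let G be the finite simple graph on 8 vertices whose complement is the disjoint union of a single edge K2 and a 6-cycle C6 (so G has 21 edges). Then G is not 1-apex. -/
import Mathlib


/-- `H` is a minor of `G`: there are pairwise disjoint nonempty connected branch sets
in `G`, one for each vertex of `H`, with an edge of `G` between the branch sets of
any two vertices adjacent in `H`. -/
def SimpleGraph.IsMinor {W V : Type*} (H : SimpleGraph W) (G : SimpleGraph V) : Prop :=
  ∃ f : W → Set V,
    (∀ w, (f w).Nonempty) ∧
    (∀ w, (G.induce (f w)).Connected) ∧
    (Pairwise fun w₁ w₂ => Disjoint (f w₁) (f w₂)) ∧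
    ∀ ⦃w₁ w₂⦄, H.Adj w₁ w₂ → ∃ v₁ ∈ f w₁, ∃ v₂ ∈ f w₂, G.Adj v₁ v₂

/-- A graph is planar iff it has no `K₅` minor and no `K₃,₃` minor (Kuratowski–Wagner). -/
def SimpleGraph.IsPlanar {V : Type*} (G : SimpleGraph V) : Prop :=
  ¬ (⊤ : SimpleGraph (Fin 5)).IsMinor G ∧
  ¬ (completeBipartiteGraph (Fin 3) (Fin 3)).IsMinor G

/-- A graph is 2-apex if it becomes planar after deleting at most two vertices. -/
def SimpleGraph.TwoApex {V : Type*} (G : SimpleGraph V) : Prop :=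
  ∃ s : Set V, s.ncard ≤ 2 ∧ (G.induce sᶜ).IsPlanar

/-- A graph is 1-apex if it becomes planar after deleting at most one vertex. -/
def SimpleGraph.OneApex {V : Type*} (G : SimpleGraph V) : Prop :=
  ∃ s : Set V, s.ncard ≤ 1 ∧ (G.induce sᶜ).IsPlanar

abbrev SG8 := (⊤ : SimpleGraph (Fin 2)) ⊕g SimpleGraph.cycleGraph 6

instance : DecidableRel SG8.Adj := fun u v =>
  match u, v with
  | .inl a, .inl b => decidable_of_iff ((⊤ : SimpleGraph (Fin 2)).Adj a b) (by simp [SimpleGraph.sum])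
  | .inr a, .inr b => decidable_of_iff ((SimpleGraph.cycleGraph 6).Adj a b) (by simp [SimpleGraph.sum])
  | .inl _, .inr _ => isFalse (by simp [SimpleGraph.sum])
  | .inr _, .inl _ => isFalse (by simp [SimpleGraph.sum])

lemma clique_connected {W : Type*} (H : SimpleGraph W) (c : Set W)
    (hne : c.Nonempty)
    (hcl : ∀ u ∈ c, ∀ v ∈ c, u = v ∨ H.Adj u v) : (H.induce c).Connected := by
  rw [SimpleGraph.connected_iff]
  constructor
  · intro u v
    rcases hcl u u.2 v v.2 with h | h
    · rw [show u = v from Subtype.ext h]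
    · exact SimpleGraph.Adj.reachable (by simpa using h)
  · exact ⟨⟨hne.choose, hne.choose_spec⟩⟩

lemma key8 {V : Type*} (G : SimpleGraph V) (e : Gᶜ ≃g SG8) (s : Set V)
    (i₀ : Fin 2 ⊕ Fin 6) (hs : s ⊆ {e.symm i₀})
    (f : Fin 5 → Finset (Fin 2 ⊕ Fin 6))
    (h1 : ∀ k, (f k).Nonempty)
    (h2 : ∀ k, ∀ u ∈ f k, ∀ v ∈ f k, u = v ∨ SG8ᶜ.Adj u v)
    (h3 : ∀ k l, k ≠ l → Disjoint (f k) (f l))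
    (h4 : ∀ k l : Fin 5, k ≠ l → ∃ u ∈ f k, ∃ v ∈ f l, SG8ᶜ.Adj u v)
    (h5 : ∀ k, i₀ ∉ f k) :
    (⊤ : SimpleGraph (Fin 5)).IsMinor (G.induce sᶜ) := by
  have hadj : ∀ u v : V, SG8ᶜ.Adj (e u) (e v) ↔ G.Adj u v := by
    intro u v
    rw [SimpleGraph.compl_adj]
    conv_rhs => rw [← compl_compl G]
    rw [SimpleGraph.compl_adj]
    simp only [Ne, EmbeddingLike.apply_eq_iff_eq, e.map_adj_iff]
  have hmem : ∀ k, ∀ j ∈ f k, e.symm j ∈ sᶜ := by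
    intro k j hj hmemS
    have h1' : e.symm j = e.symm i₀ := hs hmemS
    have h2' : j = i₀ := e.toEquiv.symm.injective h1'
    exact h5 k (h2' ▸ hj)
  refine ⟨fun k => {w : ↥sᶜ | (e ↑w : Fin 2 ⊕ Fin 6) ∈ f k}, ?_, ?_, ?_, ?_⟩
  · intro k
    obtain ⟨j, hj⟩ := h1 k
    refine ⟨⟨e.symm j, hmem k j hj⟩, ?_⟩
    show e (e.symm j) ∈ f k
    rw [RelIso.apply_symm_apply]
    exact hj
  · intro k
    apply clique_connected
    · obtain ⟨j, hj⟩ := h1 k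
      refine ⟨⟨e.symm j, hmem k j hj⟩, ?_⟩
      show e (e.symm j) ∈ f k
      rw [RelIso.apply_symm_apply]
      exact hj
    · rintro u hu v hv
      rcases h2 k _ hu _ hv with h | h
      · left
        exact Subtype.ext (e.toEquiv.injective h)
      · right
        show G.Adj ↑↑u ↑↑v
        exact (hadj _ _).mp h
  · intro k l hkl
    rw [Set.disjoint_left]
    intro w hwk hwl
    exact Finset.disjoint_left.mp (h3 k l hkl) hwk hwl
  · intro k l hkl
    obtain ⟨j1, hj1, j2, hj2, hA⟩ := h4 k l hkl.ne
    refine ⟨⟨e.symm j1, hmem k j1 hj1⟩, ?_, ⟨e.symm j2, hmem l j2 hj2⟩, ?_, ?_⟩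
    · show e (e.symm j1) ∈ f k; rw [RelIso.apply_symm_apply]; exact hj1
    · show e (e.symm j2) ∈ f l; rw [RelIso.apply_symm_apply]; exact hj2
    · have hg : G.Adj (e.symm j1) (e.symm j2) := by
        rw [← hadj, RelIso.apply_symm_apply, RelIso.apply_symm_apply]
        exact hA
      exact hg

/-- The graph on 8 vertices whose complement is the disjoint union of an edge `K₂`
and a 6-cycle `C₆` is not 1-apex. -/
theorem stmt19 {V : Type*} [Fintype V] (G : SimpleGraph V)
    (hV : Fintype.card V = 8)
    (h : Nonempty (Gᶜ ≃g ((⊤ : SimpleGraph (Fin 2)) ⊕g SimpleGraph.cycleGraph 6))) :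
    ¬ G.OneApex := by
  obtain ⟨e⟩ := h
  rintro ⟨s, hcard, hplanar⟩
  obtain ⟨i₀, hsub⟩ : ∃ i₀ : Fin 2 ⊕ Fin 6, s ⊆ {e.symm i₀} := by
    rcases s.eq_empty_or_nonempty with rfl | ⟨x, hx⟩
    · exact ⟨Sum.inl 0, by simp⟩
    · refine ⟨e x, fun y hy => ?_⟩
      have h1 : y = x := (Set.ncard_le_one_iff s.toFinite).mp hcard hy hx
      simp [h1]
  apply hplanar.1
  rcases i₀ with a | c
  · fin_cases a
    · exact key8 G e s (Sum.inl 0) hsub ![{.inl 1}, {.inr 0, .inr 3}, {.inr 1, .inr 4}, {.inr 2}, {.inr 5}] (by decide) (by decide) (by decide) (by decide) (by decide)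
    · exact key8 G e s (Sum.inl 1) hsub ![{.inl 0}, {.inr 0, .inr 3}, {.inr 1, .inr 4}, {.inr 2}, {.inr 5}] (by decide) (by decide) (by decide) (by decide) (by decide)
  · fin_cases c
    · exact key8 G e s (Sum.inr 0) hsub ![{.inl 0, .inr 2}, {.inl 1, .inr 4}, {.inr 1}, {.inr 3}, {.inr 5}] (by decide) (by decide) (by decide) (by decide) (by decide)
    · exact key8 G e s (Sum.inr 1) hsub ![{.inl 0, .inr 3}, {.inl 1, .inr 5}, {.inr 2}, {.inr 4}, {.inr 0}] (by decide) (by decide) (by decide) (by decide) (by decide)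
    · exact key8 G e s (Sum.inr 2) hsub ![{.inl 0, .inr 4}, {.inl 1, .inr 0}, {.inr 3}, {.inr 5}, {.inr 1}] (by decide) (by decide) (by decide) (by decide) (by decide)
    · exact key8 G e s (Sum.inr 3) hsub ![{.inl 0, .inr 5}, {.inl 1, .inr 1}, {.inr 4}, {.inr 0}, {.inr 2}] (by decide) (by decide) (by decide) (by decide) (by decide)
    · exact key8 G e s (Sum.inr 4) hsub ![{.inl 0, .inr 0}, {.inl 1, .inr 2}, {.inr 5}, {.inr 1}, {.inr 3}] (by decide) (by decide) (by decide) (by decide) (by decide)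
    · exact key8 G e s (Sum.inr 5) hsub ![{.inl 0, .inr 1}, {.inl 1, .inr 3}, {.inr 0}, {.inr 2}, {.inr 4}] (by decide) (by decide) (by decide) (by decide) (by decide)
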